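/- Fix α > 1 and h₀ > 0, and let h ≥ h₀. Define φ(t) = t^α for t ≤ h and φ(t) = h^α + α·h^(α−1)·(t − h) for t > h. Then there exists a constant c > 0, depending only on α and h₀ (not on h), such that for all real ℓ ≥ 1/2, 2·φ(√(ℓ² + (c·√ℓ)²)) ≤ φ(2ℓ). -/

import Mathlib

set_option maxHeartbeats 1600000 in
theorem phi_W_dimensions (α h₀ : ℝ) (hα : 1 < α) (hh₀ : 0 < h₀) :
    ∃ c : ℝ, 0 < c ∧ ∀ h : ℝ, h₀ ≤ h →
      ∀ φ : ℝ → ℝ,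
        (∀ t, φ t = if t ≤ h then t ^ α else h ^ α + α * h ^ (α - 1) * (t - h)) →
        ∀ ℓ : ℝ, (1 : ℝ) / 2 ≤ ℓ →
          2 * φ (Real.sqrt (ℓ ^ 2 + (c * Real.sqrt ℓ) ^ 2)) ≤ φ (2 * ℓ) := by
  have hα0 : (0:ℝ) < α := by linarith
  have hαm1 : (0:ℝ) < α - 1 := by linarith
  obtain ⟨e, he, hea, h2e⟩ : ∃ e : ℝ, 0 < e ∧ e * α = (α - 1) / 2 ∧ (1:ℝ) < 2 ^ e := by
    refine ⟨(α - 1) / (2 * α), by positivity, by field_simp, ?_⟩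
    rw [Real.one_lt_rpow_iff_of_pos (by norm_num : (0:ℝ) < 2)]
    exact Or.inl ⟨one_lt_two, by positivity⟩
  have hs0 : (0:ℝ) < Real.sqrt 2 := Real.sqrt_pos.mpr (by norm_num)
  have hss : Real.sqrt 2 * Real.sqrt 2 = 2 := Real.mul_self_sqrt (by norm_num)
  have hs2 : Real.sqrt 2 < 2 := by nlinarith
  obtain ⟨δ, hδpos, hδ1, hδ2, hδ3, hδ4⟩ : ∃ δ : ℝ, 0 < δ ∧ 1 + 2 * δ ≤ 2 ^ e ∧
      2 * δ ≤ (α - 1) * (2 - Real.sqrt 2) / 2 ∧ 2 * α * δ ≤ (α - 1) * h₀ ∧ δ ≤ 1 / 4 := by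
    refine ⟨min (min ((2 ^ e - 1) / 2) ((α - 1) * (2 - Real.sqrt 2) / 4))
      (min ((α - 1) * h₀ / (2 * α)) (1 / 4)), ?_, ?_, ?_, ?_, ?_⟩
    · apply lt_min <;> apply lt_min
      · linarith
      · nlinarith
      · positivity
      · norm_num
    · have h1 : min (min ((2 ^ e - 1) / 2) ((α - 1) * (2 - Real.sqrt 2) / 4))
          (min ((α - 1) * h₀ / (2 * α)) (1 / 4)) ≤ (2 ^ e - 1) / 2 :=
        le_trans (min_le_left _ _) (min_le_left _ _)
      linarith
    · have h1 : min (min ((2 ^ e - 1) / 2) ((α - 1) * (2 - Real.sqrt 2) / 4))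
          (min ((α - 1) * h₀ / (2 * α)) (1 / 4)) ≤ (α - 1) * (2 - Real.sqrt 2) / 4 :=
        le_trans (min_le_left _ _) (min_le_right _ _)
      linarith
    · have h1 : min (min ((2 ^ e - 1) / 2) ((α - 1) * (2 - Real.sqrt 2) / 4))
          (min ((α - 1) * h₀ / (2 * α)) (1 / 4)) ≤ (α - 1) * h₀ / (2 * α) :=
        le_trans (min_le_right _ _) (min_le_left _ _)
      have h2 : 0 < 2 * α := by linarith
      rw [le_div_iff₀ h2] at h1
      nlinarith
    · exact le_trans (min_le_right _ _) (min_le_right _ _)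
  refine ⟨Real.sqrt (2 * δ), Real.sqrt_pos.mpr (by linarith), ?_⟩
  intro h hh φ hφ ℓ hℓ
  have hh0 : 0 < h := lt_of_lt_of_le hh₀ hh
  have hℓ0 : 0 < ℓ := by linarith
  have hm0 : 0 < ℓ + δ := by linarith
  -- the key quantitative bound
  have key : (ℓ + δ) ^ α ≤ 2 ^ ((α - 1) / 2) * ℓ ^ α := by
    have h1 : ℓ + δ ≤ ℓ * (1 + 2 * δ) := by nlinarith
    calc (ℓ + δ) ^ α ≤ (ℓ * (1 + 2 * δ)) ^ α :=
          Real.rpow_le_rpow (by linarith) h1 hα0.le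
      _ = ℓ ^ α * (1 + 2 * δ) ^ α := Real.mul_rpow hℓ0.le (by linarith)
      _ ≤ ℓ ^ α * (2 ^ e) ^ α := by
          apply mul_le_mul_of_nonneg_left _ (Real.rpow_nonneg hℓ0.le α)
          exact Real.rpow_le_rpow (by linarith) hδ1 hα0.le
      _ = 2 ^ ((α - 1) / 2) * ℓ ^ α := by
          rw [← Real.rpow_mul (by norm_num : (0:ℝ) ≤ 2), hea, mul_comm]
  -- monotonicity of φ on nonnegatives
  have mono : ∀ x y : ℝ, 0 ≤ x → x ≤ y → φ x ≤ φ y := by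
    intro x y hx hxy
    rw [hφ, hφ]
    have hP : (0:ℝ) ≤ α * h ^ (α - 1) :=
      mul_nonneg hα0.le (Real.rpow_nonneg hh0.le _)
    split_ifs with h1 h2 h2
    · exact Real.rpow_le_rpow hx hxy hα0.le
    · have hx' : x ^ α ≤ h ^ α := Real.rpow_le_rpow hx h1 hα0.le
      nlinarith [mul_nonneg hP (by linarith : (0:ℝ) ≤ y - h)]
    · linarith
    · nlinarith [mul_le_mul_of_nonneg_left hxy hP]
  -- main inequality : 2 φ(ℓ+δ) ≤ φ(2ℓ)
  have main : 2 * φ (ℓ + δ) ≤ φ (2 * ℓ) := by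
    rw [hφ, hφ]
    have E : h ^ α = h ^ (α - 1) * h := by
      rw [← Real.rpow_add_one hh0.ne' (α - 1)]; congr 1; ring
    have P0 : (0:ℝ) < h ^ (α - 1) := Real.rpow_pos_of_pos hh0 _
    by_cases hc1 : 2 * ℓ ≤ h
    · rw [if_pos hc1, if_pos (by linarith : ℓ + δ ≤ h)]
      have h2a : (2 * ℓ) ^ α = 2 ^ α * ℓ ^ α := Real.mul_rpow (by norm_num) hℓ0.le
      have h2b : 2 * (2:ℝ) ^ (α - 1) = 2 ^ α := by
        calc 2 * (2:ℝ) ^ (α - 1) = 2 ^ (1:ℝ) * 2 ^ (α - 1) := by rw [Real.rpow_one]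
          _ = 2 ^ (1 + (α - 1)) := (Real.rpow_add (by norm_num) 1 (α - 1)).symm
          _ = 2 ^ α := by rw [show (1:ℝ) + (α - 1) = α by ring]
      have h2c : (2:ℝ) ^ ((α - 1) / 2) ≤ 2 ^ (α - 1) :=
        (Real.rpow_le_rpow_left_iff one_lt_two).mpr (by linarith)
      have hl0 : (0:ℝ) ≤ ℓ ^ α := Real.rpow_nonneg hℓ0.le α
      rw [h2a, ← h2b]
      linarith [mul_le_mul_of_nonneg_right h2c hl0, key]
    · rw [if_neg hc1]
      have hc1' : h < 2 * ℓ := not_le.mp hc1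
      by_cases hm : ℓ + δ ≤ h
      · rw [if_pos hm]
        have Q0 : (0:ℝ) < (ℓ + δ) ^ (α - 1) := Real.rpow_pos_of_pos hm0 _
        have EQ : (ℓ + δ) ^ α = (ℓ + δ) ^ (α - 1) * (ℓ + δ) := by
          rw [← Real.rpow_add_one hm0.ne' (α - 1)]; congr 1; ring
        have hQP : (ℓ + δ) ^ (α - 1) ≤ h ^ (α - 1) :=
          Real.rpow_le_rpow hm0.le hm hαm1.le
        by_cases hsub : 2 * δ ≤ (α - 1) * (2 * ℓ - h)
        · -- h is not too close to 2ℓ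
          have h1 : h ^ (α - 1) * (2 * ℓ + 2 * δ) ≤
              h ^ (α - 1) * (h + α * (2 * ℓ - h)) := by
            apply mul_le_mul_of_nonneg_left _ P0.le
            nlinarith [hsub]
          have h2 : (ℓ + δ) ^ (α - 1) * (2 * (ℓ + δ)) ≤
              h ^ (α - 1) * (2 * (ℓ + δ)) :=
            mul_le_mul_of_nonneg_right hQP (by linarith)
          rw [E, EQ]
          nlinarith [h1, h2]
        · -- h close to 2ℓ, so h ≥ √2 ℓ
          have hsq : Real.sqrt 2 * ℓ ≤ h := by
            have h1 : (α - 1) * (2 * ℓ - h) < 2 * δ := not_le.mp hsub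
            have h2 : (α - 1) * (2 - Real.sqrt 2) / 2 ≤ (α - 1) * ((2 - Real.sqrt 2) * ℓ) := by
              rw [div_le_iff₀ (by norm_num : (0:ℝ) < 2)]
              have : (1:ℝ) ≤ 2 * ℓ := by linarith
              nlinarith
            have h3 : (α - 1) * (2 * ℓ - h) < (α - 1) * ((2 - Real.sqrt 2) * ℓ) := by
              linarith
            have h4 : 2 * ℓ - h < (2 - Real.sqrt 2) * ℓ :=
              lt_of_mul_lt_mul_left h3 hαm1.le
            linarith
          have hP_ge : (Real.sqrt 2 * ℓ) ^ (α - 1) ≤ h ^ (α - 1) :=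
            Real.rpow_le_rpow (by positivity) hsq hαm1.le
          have hexp : (Real.sqrt 2 * ℓ) ^ (α - 1) =
              2 ^ ((α - 1) / 2) * ℓ ^ (α - 1) := by
            rw [Real.mul_rpow hs0.le hℓ0.le, Real.sqrt_eq_rpow,
              ← Real.rpow_mul (by norm_num : (0:ℝ) ≤ 2)]
            congr 2
            ring
          have hℓα : ℓ ^ α = ℓ ^ (α - 1) * ℓ := by
            rw [← Real.rpow_add_one hℓ0.ne' (α - 1)]; congr 1; ring
          have step1 : 2 * (ℓ + δ) ^ α ≤ h ^ (α - 1) * (2 * ℓ) := by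
            calc 2 * (ℓ + δ) ^ α ≤ 2 * (2 ^ ((α - 1) / 2) * ℓ ^ α) := by linarith
              _ = (2 ^ ((α - 1) / 2) * ℓ ^ (α - 1)) * (2 * ℓ) := by rw [hℓα]; ring
              _ = (Real.sqrt 2 * ℓ) ^ (α - 1) * (2 * ℓ) := by rw [hexp]
              _ ≤ h ^ (α - 1) * (2 * ℓ) :=
                  mul_le_mul_of_nonneg_right hP_ge (by linarith)
          have step2 : h ^ (α - 1) * (2 * ℓ) ≤ h ^ α + α * h ^ (α - 1) * (2 * ℓ - h) := by
            rw [E]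
            nlinarith [mul_nonneg P0.le (mul_nonneg hαm1.le
              (by linarith : (0:ℝ) ≤ 2 * ℓ - h))]
          linarith
      · -- both points beyond h : case 3
        rw [if_neg hm]
        have hδ3' : 2 * α * δ ≤ (α - 1) * h := by nlinarith
        rw [E]
        nlinarith [mul_le_mul_of_nonneg_left hδ3' P0.le]
  -- reduce the sqrt argument to ℓ + δ
  have hc2 : Real.sqrt (2 * δ) ^ 2 = 2 * δ := Real.sq_sqrt (by linarith)
  have hsl : Real.sqrt ℓ ^ 2 = ℓ := Real.sq_sqrt hℓ0.le
  have harg : (Real.sqrt (2 * δ) * Real.sqrt ℓ) ^ 2 = 2 * δ * ℓ := by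
    rw [mul_pow, hc2, hsl]
  have ha : Real.sqrt (ℓ ^ 2 + (Real.sqrt (2 * δ) * Real.sqrt ℓ) ^ 2) ≤ ℓ + δ := by
    rw [harg]
    calc Real.sqrt (ℓ ^ 2 + 2 * δ * ℓ) ≤ Real.sqrt ((ℓ + δ) ^ 2) :=
        Real.sqrt_le_sqrt (by nlinarith)
      _ = ℓ + δ := Real.sqrt_sq hm0.le
  calc 2 * φ (Real.sqrt (ℓ ^ 2 + (Real.sqrt (2 * δ) * Real.sqrt ℓ) ^ 2))
      ≤ 2 * φ (ℓ + δ) := by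
        have := mono _ _ (Real.sqrt_nonneg _) ha
        linarith
    _ ≤ φ (2 * ℓ) := main
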